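/- The multiplication-based Dragonfly integral returns a known nonzero value exactly when the capacity of the known-support is known and nonzero: ∫^{⊗_D}_{DPR,μ} f >_ℓ * if and only if μ({i : f_i >_ℓ *}) >_ℓ *. -/

import Mathlib

/-- A linearly ordered (bounded, integral-scale) residuated lattice:
`⊥` plays the role of `0` and `⊤` the role of `1`. -/
class LinResLat (L : Type*) extends LinearOrder L, BoundedOrder L where
  mul : L → L → L
  imp : L → L → L
  mul_comm : ∀ a b : L, mul a b = mul b a
  mul_assoc : ∀ a b c : L, mul (mul a b) c = mul a (mul b c)
  mul_one : ∀ a : L, mul a ⊤ = a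
  adjoint : ∀ a b c : L, mul a b ≤ c ↔ a ≤ imp b c
  bot_lt_top : (⊥ : L) < ⊤

/-- The Dragonfly carrier `L* = L ∪ {*}`. -/
inductive Dstar (L : Type*) where
  | of : L → Dstar L
  | star : Dstar L

namespace Dstar

variable {L : Type*} [LinResLat L]

/-- Dragonfly multiplication `⊗_D`. -/
def dmul : Dstar L → Dstar L → Dstar L
  | of a, of b => of (LinResLat.mul a b)
  | of a, star => if a = ⊥ then of ⊥ else star
  | star, of b => if b = ⊥ then of ⊥ else star
  | star, star => star

/-- Dragonfly meet `∧_D`. -/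
def dmeet : Dstar L → Dstar L → Dstar L
  | of a, of b => of (a ⊓ b)
  | of a, star => if a = ⊥ then of ⊥ else star
  | star, of b => if b = ⊥ then of ⊥ else star
  | star, star => star

/-- Dragonfly join `∨_D`. -/
def djoin : Dstar L → Dstar L → Dstar L
  | of a, of b => of (a ⊔ b)
  | of a, star => if a = ⊥ then star else of a
  | star, of b => if b = ⊥ then star else of b
  | star, star => star

/-- Dragonfly residuum `→_D`. -/
def dimp : Dstar L → Dstar L → Dstar L
  | of a, of b => of (LinResLat.imp a b)
  | of a, star => if a = ⊥ then of ⊤ else star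
  | star, of b => if b = ⊥ then star else of b
  | star, star => of ⊤

/-- Embedding of `L*` into `Lex (L × Bool)` realizing the linear order `≤_ℓ`
which extends the order of `L` with `0 <_ℓ * <_ℓ α` for all `α ∈ L \ {0}`. -/
def emb : Dstar L → Lex (L × Bool)
  | of a => toLex (a, false)
  | star => toLex ((⊥ : L), true)

theorem emb_injective : Function.Injective (emb (L := L)) := by
  intro x y h
  cases x <;> cases y <;>
    simp only [emb, toLex_inj, Prod.mk.injEq] at h <;> simp_all

/-- The linear order `≤_ℓ` on the Dragonfly algebra. -/
instance : LinearOrder (Dstar L) := LinearOrder.lift' emb emb_injective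

theorem le_def (x y : Dstar L) : x ≤ y ↔ emb x ≤ emb y := Iff.rfl

instance : OrderBot (Dstar L) where
  bot := of ⊥
  bot_le x := by
    cases x with
    | of a => rw [le_def]; simp only [emb, Prod.Lex.le_iff]; exact bot_le.lt_or_eq.imp id (by simp_all)
    | star => rw [le_def]; simp [emb, Prod.Lex.le_iff]
instance : OrderTop (Dstar L) where
  top := of ⊤
  le_top x := by
    cases x with
    | of a => rw [le_def]; simp only [emb, Prod.Lex.le_iff]; exact le_top.lt_or_eq.imp id (by simp_all)
    | star => rw [le_def]; simp only [emb, Prod.Lex.le_iff]; exact Or.inl LinResLat.bot_lt_top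

theorem bot_eq : (⊥ : Dstar L) = of ⊥ := rfl
theorem top_eq : (⊤ : Dstar L) = of ⊤ := rfl

variable {ι : Type*} [Fintype ι] [DecidableEq ι]

/-- The multiplication-based qualitative (DPR) integral on the Dragonfly algebra:
`∫^{⊗_D}_{DPR,μ} f = ⋁_{A ⊆ C} (μ(A) ⊗_D ⋀_{i ∈ A} f_i)`. -/
def integMul (μ : Finset ι → Dstar L) (f : ι → Dstar L) : Dstar L :=
  Finset.univ.powerset.sup fun A => dmul (μ A) (A.inf f)

/-- The conjugate capacity `μ^c(A) = μ(C \ A) →_D 0`. -/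
def conj (μ : Finset ι → Dstar L) (A : Finset ι) : Dstar L :=
  dimp (μ Aᶜ) (of ⊥)

/-- The residuum-based qualitative (DPR) integral on the Dragonfly algebra:
`∫^{→_D}_{DPR,μ} f = ⋀_{A ⊆ C} (μ^c(A) →_D ⋁_{i ∈ A} f_i)`. -/
def integImp (μ : Finset ι → Dstar L) (f : ι → Dstar L) : Dstar L :=
  Finset.univ.powerset.inf fun A => dimp (conj μ A) (A.sup f)

end Dstar


open Dstar in
theorem dstar_lt_iff {L : Type*} [LinResLat L] (x : Dstar L) :
    Dstar.star < x ↔ ∃ a, x = Dstar.of a ∧ a ≠ ⊥ := by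
  cases x with
  | star => simp [lt_irrefl]
  | of a =>
    constructor
    · intro h
      refine ⟨a, rfl, ?_⟩
      rintro rfl
      have h2 : emb (Dstar.star) < emb (Dstar.of (⊥ : L)) := h
      simp only [emb, Prod.Lex.lt_iff] at h2
      rcases h2 with h2 | ⟨_, h2⟩
      · exact absurd h2 (lt_irrefl _)
      · exact absurd h2 (by exact of_decide_eq_false rfl)
    · rintro ⟨b, hb, hb0⟩
      injection hb with h
      subst h
      show emb (Dstar.star) < emb (Dstar.of a)
      simp only [emb, Prod.Lex.lt_iff]
      exact Or.inl (bot_lt_iff_ne_bot.mpr hb0)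

open Dstar in
theorem dmul_star_lt {L : Type*} [LinResLat L]
    (hnzd : ∀ a b : L, LinResLat.mul a b = ⊥ → a = ⊥ ∨ b = ⊥) (x y : Dstar L) :
    Dstar.star < dmul x y ↔ Dstar.star < x ∧ Dstar.star < y := by
  have hnotstar : ¬ (Dstar.star : Dstar L) < Dstar.star := lt_irrefl _
  have hnotbot : ¬ (Dstar.star : Dstar L) < Dstar.of ⊥ := by
    rw [dstar_lt_iff]
    rintro ⟨a, ha, h0⟩
    injection ha with h
    exact h0 h.symm
  cases x with
  | star =>
    cases y with
    | star => exact iff_of_false hnotstar (fun h => hnotstar h.1)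
    | of b =>
      by_cases hb : b = ⊥
      · simp only [dmul, hb, if_pos rfl]
        exact iff_of_false hnotbot (fun h => hnotstar h.1)
      · simp only [dmul, if_neg hb]
        exact iff_of_false hnotstar (fun h => hnotstar h.1)
  | of a =>
    cases y with
    | star =>
      by_cases ha : a = ⊥
      · simp only [dmul, ha, if_pos rfl]
        exact iff_of_false hnotbot (fun h => hnotstar h.2)
      · simp only [dmul, if_neg ha]
        exact iff_of_false hnotstar (fun h => hnotstar h.2)
    | of b =>
      simp only [dmul, dstar_lt_iff]
      have mulbot : ∀ c : L, LinResLat.mul ⊥ c = ⊥ := fun c =>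
        le_antisymm ((LinResLat.adjoint ⊥ c ⊥).mpr bot_le) bot_le
      constructor
      · rintro ⟨c, hc, hc0⟩
        obtain rfl : LinResLat.mul a b = c := by injection hc
        refine ⟨⟨a, rfl, ?_⟩, ⟨b, rfl, ?_⟩⟩
        · rintro rfl; exact hc0 (mulbot b)
        · rintro rfl; exact hc0 (by rw [LinResLat.mul_comm]; exact mulbot a)
      · rintro ⟨⟨c, hc, hc0⟩, ⟨d, hd, hd0⟩⟩
        obtain rfl : a = c := by injection hc
        obtain rfl : b = d := by injection hd
        refine ⟨LinResLat.mul a b, rfl, ?_⟩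
        intro h
        rcases hnzd a b h with h|h
        · exact hc0 h
        · exact hd0 h

open Dstar in
/-- `∫^{⊗_D}_{DPR,μ} f >_ℓ *` if and only if `μ({i : f_i >_ℓ *}) >_ℓ *`. -/
theorem integMul_gt_star_iff {L ι : Type*} [LinResLat L]
    [Fintype ι] [DecidableEq ι] [Nonempty ι]
    (hnzd : ∀ a b : L, LinResLat.mul a b = ⊥ → a = ⊥ ∨ b = ⊥)
    (μ : Finset ι → Dstar L)
    (hμ0 : μ ∅ = Dstar.of ⊥) (hμ1 : μ Finset.univ = Dstar.of ⊤)
    (hmono : ∀ A B : Finset ι, A ⊆ B → μ A ≤ μ B)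
    (f : ι → Dstar L) :
    Dstar.star < integMul μ f ↔
      Dstar.star < μ (Finset.univ.filter fun i => Dstar.star < f i) := by
  classical
  have hstartop : (Dstar.star : Dstar L) < ⊤ := by
    rw [top_eq, dstar_lt_iff]
    exact ⟨⊤, rfl, (LinResLat.bot_lt_top).ne'⟩
  set S := Finset.univ.filter fun i => Dstar.star < f i with hS
  unfold integMul
  rw [Finset.lt_sup_iff]
  constructor
  · rintro ⟨A, -, hA⟩
    rw [dmul_star_lt hnzd] at hA
    obtain ⟨h1, h2⟩ := hA
    have hAS : A ⊆ S := by
      intro i hi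
      rw [hS, Finset.mem_filter]
      exact ⟨Finset.mem_univ i, (Finset.lt_inf_iff hstartop).mp h2 i hi⟩
    exact lt_of_lt_of_le h1 (hmono A S hAS)
  · intro h
    refine ⟨S, Finset.mem_powerset.mpr (Finset.subset_univ S), ?_⟩
    rw [dmul_star_lt hnzd]
    refine ⟨h, (Finset.lt_inf_iff hstartop).mpr ?_⟩
    intro i hi
    rw [hS, Finset.mem_filter] at hi
    exact hi.2
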